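/- For every OV C = (R_1,T_1),…,(R_k,T_k) and every real time point T, the sequence insert(C, T) is again an OV and it represents the same set of space-time as C, i.e. ⟦insert(C, T)⟧ = ⟦C⟧. -/

import Mathlib

open Set

/-- The semantics of an operation volume (OV) with regions `R` and strictly
increasing time points `T`: the subset of space-time
`(⋃_{i<k} R_i × [T_i, T_{i+1})) ∪ (R_last × [T_last, ∞))`. -/
def OVsem {k : ℕ} (R : Fin (k + 1) → Set (Fin 3 → ℝ)) (T : Fin (k + 1) → ℝ) :
    Set ((Fin 3 → ℝ) × ℝ) :=
  (⋃ i : Fin k,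
      {p : (Fin 3 → ℝ) × ℝ | p.1 ∈ R i.castSucc ∧ T i.castSucc ≤ p.2 ∧ p.2 < T i.succ}) ∪
    {p : (Fin 3 → ℝ) × ℝ | p.1 ∈ R (Fin.last k) ∧ T (Fin.last k) ≤ p.2}

/-- `insert(C, t)`: prepend `(∅, t)` if `t < T_1`, insert `(R_i, t)` if
`T_i < t < T_{i+1}` for some `i < k`, append `(R_k, t)` if `t > T_k`, and
return `C` unchanged otherwise. -/
noncomputable def OVinsert {k : ℕ} (R : Fin (k + 1) → Set (Fin 3 → ℝ))
    (T : Fin (k + 1) → ℝ) (t : ℝ) :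
    Σ m : ℕ, (Fin (m + 1) → Set (Fin 3 → ℝ)) × (Fin (m + 1) → ℝ) :=
  if t < T 0 then
    ⟨k + 1, (Fin.cons (∅ : Set (Fin 3 → ℝ)) R, Fin.cons t T)⟩
  else if h : ∃ i : Fin k, T i.castSucc < t ∧ t < T i.succ then
    ⟨k + 1, (Fin.insertNth h.choose.succ.castSucc (R h.choose.castSucc) R,
      Fin.insertNth h.choose.succ.castSucc t T)⟩
  else if T (Fin.last k) < t then
    ⟨k + 1, (Fin.snoc R (R (Fin.last k)), Fin.snoc T t)⟩
  else ⟨k, (R, T)⟩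

/-- For every OV `C` and every real time point `t`, `insert(C, t)` is again an
OV (strictly increasing time points) and represents the same set of space-time
as `C`. -/
lemma mem_OVsem {k : ℕ} {R : Fin (k + 1) → Set (Fin 3 → ℝ)} {T : Fin (k + 1) → ℝ}
    (hT : Monotone T) (p : (Fin 3 → ℝ) × ℝ) :
    p ∈ OVsem R T ↔ ∃ i, p.1 ∈ R i ∧ T i ≤ p.2 ∧ ∀ j, i < j → p.2 < T j := by
  constructor
  · rintro (h | h)
    · obtain ⟨i, hi⟩ := mem_iUnion.1 h
      exact ⟨i.castSucc, hi.1, hi.2.1,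
        fun j hj => lt_of_lt_of_le hi.2.2 (hT (Fin.castSucc_lt_iff_succ_le.1 hj))⟩
    · exact ⟨Fin.last k, h.1, h.2, fun j hj => absurd hj (not_lt.2 (Fin.le_last j))⟩
  · rintro ⟨i, hx, hle, hlt⟩
    by_cases hi : i = Fin.last k
    · right; exact ⟨hi ▸ hx, hi ▸ hle⟩
    · obtain ⟨m, rfl⟩ := Fin.exists_castSucc_eq.2 hi
      exact Or.inl (mem_iUnion.2 ⟨m, hx, hle, hlt _ (Fin.castSucc_lt_succ (i := m))⟩)

theorem insert_isOV_and_sem_eq {k : ℕ}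
    (R : Fin (k + 1) → Set (Fin 3 → ℝ)) (T : Fin (k + 1) → ℝ)
    (hT : StrictMono T) (t : ℝ) :
    StrictMono (OVinsert R T t).2.2 ∧
      OVsem (OVinsert R T t).2.1 (OVinsert R T t).2.2 = OVsem R T := by
  unfold OVinsert
  by_cases h1 : t < T 0
  · -- prepend
    rw [if_pos h1]
    dsimp only
    have hT' : StrictMono (Fin.cons t T : Fin (k + 1 + 1) → ℝ) := by
      rw [Fin.strictMono_iff_lt_succ]
      intro i
      induction i using Fin.cases with
      | zero => simpa using h1
      | succ m =>
        rw [← Fin.succ_castSucc, Fin.cons_succ, Fin.cons_succ]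
        exact hT (Fin.castSucc_lt_succ (i := m))
    refine ⟨hT', ?_⟩
    ext q
    rw [mem_OVsem hT'.monotone, mem_OVsem hT.monotone]
    constructor
    · rintro ⟨i, hx, hle, hlt⟩
      induction i using Fin.cases with
      | zero => simp [Fin.cons_zero] at hx
      | succ m =>
        rw [Fin.cons_succ] at hx hle
        exact ⟨m, hx, hle, fun j hj => by
          simpa [Fin.cons_succ] using hlt j.succ (Fin.succ_lt_succ_iff.2 hj)⟩
    · rintro ⟨i, hx, hle, hlt⟩
      refine ⟨i.succ, by simpa [Fin.cons_succ] using hx, by simpa [Fin.cons_succ] using hle,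
        fun j hj => ?_⟩
      induction j using Fin.cases with
      | zero => exact absurd hj (by simp)
      | succ m => simpa [Fin.cons_succ] using hlt m (Fin.succ_lt_succ_iff.1 hj)
  rw [if_neg h1]
  by_cases h2 : ∃ i : Fin k, T i.castSucc < t ∧ t < T i.succ
  · rw [dif_pos h2]
    dsimp only
    set i0 : Fin k := h2.choose with hi0
    obtain ⟨hc1, hc2⟩ := h2.choose_spec
    set p0 : Fin (k + 1 + 1) := i0.succ.castSucc with hp0
    have hA : ∀ j : Fin (k + 1), p0 < p0.succAbove j → i0.succ ≤ j := fun j hj => by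
      have := (Fin.lt_succAbove_iff_le_castSucc p0 j).1 hj
      rw [hp0, Fin.castSucc_le_castSucc_iff] at this
      exact this
    have hB : ∀ j : Fin (k + 1), p0.succAbove j < p0 → j ≤ i0.castSucc := fun j hj => by
      have := (Fin.succAbove_lt_iff_castSucc_lt p0 j).1 hj
      rw [hp0, Fin.castSucc_lt_castSucc_iff] at this
      rw [Fin.le_def]
      have h' := Fin.lt_def.1 this
      simp only [Fin.val_succ] at h'
      simp only [Fin.coe_castSucc]
      omega
    have hT' : StrictMono (p0.insertNth t T) := by
      intro a b hab
      rcases eq_or_ne a p0 with rfl | ha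
      · rcases eq_or_ne b p0 with rfl | hb
        · exact absurd hab (lt_irrefl _)
        · obtain ⟨j, rfl⟩ := Fin.exists_succAbove_eq hb
          rw [Fin.insertNth_apply_same, Fin.insertNth_apply_succAbove]
          exact lt_of_lt_of_le hc2 (hT.monotone (hA j hab))
      · obtain ⟨j, rfl⟩ := Fin.exists_succAbove_eq ha
        rcases eq_or_ne b p0 with rfl | hb
        · rw [Fin.insertNth_apply_same, Fin.insertNth_apply_succAbove]
          exact lt_of_le_of_lt (hT.monotone (hB j hab)) hc1
        · obtain ⟨j2, rfl⟩ := Fin.exists_succAbove_eq hb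
          rw [Fin.insertNth_apply_succAbove, Fin.insertNth_apply_succAbove]
          exact hT (Fin.succAbove_lt_succAbove_iff.1 hab)
    refine ⟨hT', ?_⟩
    ext q
    rw [mem_OVsem hT'.monotone, mem_OVsem hT.monotone]
    constructor
    · rintro ⟨i, hx, hle, hlt⟩
      rcases eq_or_ne i p0 with rfl | hi
      · rw [Fin.insertNth_apply_same] at hx hle
        refine ⟨i0.castSucc, hx, le_trans hc1.le hle, fun j hj => ?_⟩
        have hj' : i0.succ ≤ j := Fin.castSucc_lt_iff_succ_le.1 hj
        have hsa : p0.succAbove j = j.succ :=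
          Fin.succAbove_of_le_castSucc _ _ (Fin.castSucc_le_castSucc_iff.2 hj')
        have hplt : p0 < j.succ := by
          rw [Fin.lt_def]
          have := Fin.le_def.1 hj'
          simp only [Fin.val_succ] at this ⊢
          simp only [hp0, Fin.coe_castSucc, Fin.val_succ]
          omega
        have := hlt j.succ hplt
        rwa [← hsa, Fin.insertNth_apply_succAbove] at this
      · obtain ⟨j, rfl⟩ := Fin.exists_succAbove_eq hi
        rw [Fin.insertNth_apply_succAbove] at hx hle
        exact ⟨j, hx, hle, fun j2 hj2 => by
          simpa using hlt (p0.succAbove j2) (Fin.succAbove_lt_succAbove_iff.2 hj2)⟩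
    · rintro ⟨i, hx, hle, hlt⟩
      by_cases hst : q.2 < t
      · refine ⟨p0.succAbove i, by simpa using hx, by simpa using hle, fun j hj => ?_⟩
        rcases eq_or_ne j p0 with rfl | hj'
        · rwa [Fin.insertNth_apply_same]
        · obtain ⟨j2, rfl⟩ := Fin.exists_succAbove_eq hj'
          rw [Fin.insertNth_apply_succAbove]
          exact hlt j2 (Fin.succAbove_lt_succAbove_iff.1 hj)
      · rcases lt_trichotomy i i0.castSucc with hlt' | heq | hgt
        · have hq := hlt i0.castSucc hlt'
          have := not_lt.1 hst
          linarith
        · subst heq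
          refine ⟨p0, by rwa [Fin.insertNth_apply_same],
            by rw [Fin.insertNth_apply_same]; exact not_lt.1 hst, fun j hj => ?_⟩
          obtain ⟨j2, rfl⟩ := Fin.exists_succAbove_eq hj.ne'
          rw [Fin.insertNth_apply_succAbove]
          exact hlt j2 (lt_of_lt_of_le (Fin.castSucc_lt_succ (i := i0)) (hA j2 hj))
        · have hge : i0.succ ≤ i := Fin.castSucc_lt_iff_succ_le.1 hgt
          have hsa : p0.succAbove i = i.succ :=
            Fin.succAbove_of_le_castSucc _ _ (Fin.castSucc_le_castSucc_iff.2 hge)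
          refine ⟨p0.succAbove i, by simpa using hx, by simpa using hle, fun j hj => ?_⟩
          rcases eq_or_ne j p0 with rfl | hj'
          · exfalso
            rw [hsa, Fin.lt_def] at hj
            have := Fin.le_def.1 hge
            simp only [Fin.val_succ] at hj this
            simp only [hp0, Fin.coe_castSucc, Fin.val_succ] at hj
            omega
          · obtain ⟨j2, rfl⟩ := Fin.exists_succAbove_eq hj'
            rw [Fin.insertNth_apply_succAbove]
            exact hlt j2 (Fin.succAbove_lt_succAbove_iff.1 hj)
  rw [dif_neg h2]
  by_cases h3 : T (Fin.last k) < t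
  · rw [if_pos h3]
    dsimp only
    have hT' : StrictMono (Fin.snoc T t : Fin (k + 1 + 1) → ℝ) := by
      rw [Fin.strictMono_iff_lt_succ]
      intro i
      induction i using Fin.lastCases with
      | last =>
        rw [Fin.succ_last, Fin.snoc_last, Fin.snoc_castSucc]
        exact h3
      | cast m =>
        rw [Fin.succ_castSucc, Fin.snoc_castSucc, Fin.snoc_castSucc]
        exact hT (Fin.castSucc_lt_succ (i := m))
    refine ⟨hT', ?_⟩
    ext q
    rw [mem_OVsem hT'.monotone, mem_OVsem hT.monotone]
    constructor
    · rintro ⟨i, hx, hle, hlt⟩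
      induction i using Fin.lastCases with
      | last =>
        rw [Fin.snoc_last] at hle
        rw [Fin.snoc_last] at hx
        exact ⟨Fin.last k, hx, le_trans h3.le hle,
          fun j hj => absurd hj (not_lt.2 (Fin.le_last j))⟩
      | cast m =>
        rw [Fin.snoc_castSucc] at hx hle
        exact ⟨m, hx, hle, fun j hj => by
          simpa using hlt j.castSucc (Fin.castSucc_lt_castSucc_iff.2 hj)⟩
    · rintro ⟨i, hx, hle, hlt⟩
      by_cases hst : q.2 < t
      · refine ⟨i.castSucc, by simpa using hx, by simpa using hle, fun j hj => ?_⟩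
        induction j using Fin.lastCases with
        | last => simpa using hst
        | cast m => simpa using hlt m (Fin.castSucc_lt_castSucc_iff.1 hj)
      · have hi : i = Fin.last k := by
          by_contra hne
          obtain ⟨m, rfl⟩ := Fin.exists_castSucc_eq.2 hne
          have hs1 := hlt m.succ (Fin.castSucc_lt_succ (i := m))
          have hs2 : T m.succ ≤ T (Fin.last k) := hT.monotone (Fin.le_last _)
          have := not_lt.1 hst
          linarith
        subst hi
        refine ⟨Fin.last (k + 1), by simpa using hx, ?_,
          fun j hj => absurd hj (not_lt.2 (Fin.le_last j))⟩
        rw [Fin.snoc_last]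
        exact not_lt.1 hst
  · rw [if_neg h3]
    exact ⟨hT, rfl⟩
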